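/- If (aₙ) is a complex sequence with ∑_{n=0}^∞ (n+2)⁵/(n+1)·|aₙ|² = M² < ∞, then for every z with |z| < 1, the series ∑ aₙ zⁿ converges absolutely and |∑_{n=0}^∞ aₙ zⁿ| ≤ √(ζ(4) − ζ(5)) · M. -/

import Mathlib

lemma stmt5_summable_shift : Summable (fun n : ℕ => ((n : ℝ) + 1) / ((n : ℝ) + 2) ^ 5) := by
  have h4 : Summable (fun n : ℕ => 1 / ((n : ℝ) + 2) ^ 4) := by
    have := (Real.summable_one_div_nat_pow (p := 4)).2 (by norm_num)
    exact ((summable_nat_add_iff 2).2 this).congr fun n => by push_cast; ring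
  have h5 : Summable (fun n : ℕ => 1 / ((n : ℝ) + 2) ^ 5) := by
    have := (Real.summable_one_div_nat_pow (p := 5)).2 (by norm_num)
    exact ((summable_nat_add_iff 2).2 this).congr fun n => by push_cast; ring
  refine (h4.sub h5).congr fun n => ?_
  have h2 : ((n : ℝ) + 2) ≠ 0 := by positivity
  field_simp
  ring

lemma stmt5_zeta_re_eq : (riemannZeta 4 - riemannZeta 5).re
    = ∑' n : ℕ, ((n : ℝ) + 1) / ((n : ℝ) + 2) ^ 5 := by
  have hs4 : Summable (fun n : ℕ => 1 / ((n : ℝ) + 1) ^ 4) := by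
    have := (Real.summable_one_div_nat_pow (p := 4)).2 (by norm_num)
    exact ((summable_nat_add_iff 1).2 this).congr fun n => by push_cast; ring
  have hs5 : Summable (fun n : ℕ => 1 / ((n : ℝ) + 1) ^ 5) := by
    have := (Real.summable_one_div_nat_pow (p := 5)).2 (by norm_num)
    exact ((summable_nat_add_iff 1).2 this).congr fun n => by push_cast; ring
  have e4 : riemannZeta 4 = ((∑' n : ℕ, 1 / ((n : ℝ) + 1) ^ 4 : ℝ) : ℂ) := by
    rw [zeta_eq_tsum_one_div_nat_add_one_cpow (by norm_num), Complex.ofReal_tsum]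
    congr 1; funext n
    rw [show (4 : ℂ) = ((4 : ℕ) : ℂ) by norm_num, Complex.cpow_natCast]
    push_cast; ring
  have e5 : riemannZeta 5 = ((∑' n : ℕ, 1 / ((n : ℝ) + 1) ^ 5 : ℝ) : ℂ) := by
    rw [zeta_eq_tsum_one_div_nat_add_one_cpow (by norm_num), Complex.ofReal_tsum]
    congr 1; funext n
    rw [show (5 : ℂ) = ((5 : ℕ) : ℂ) by norm_num, Complex.cpow_natCast]
    push_cast; ring
  rw [e4, e5, ← Complex.ofReal_sub, Complex.ofReal_re, ← Summable.tsum_sub hs4 hs5]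
  have hd : Summable (fun n : ℕ => 1 / ((n : ℝ) + 1) ^ 4 - 1 / ((n : ℝ) + 1) ^ 5) :=
    hs4.sub hs5
  rw [Summable.tsum_eq_zero_add hd]
  simp only [Nat.cast_zero]
  norm_num
  congr 1; funext n
  have h2 : ((n : ℝ) + 2) ≠ 0 := by positivity
  field_simp
  ring

lemma stmt5_tsum_CS (f g : ℕ → ℝ) (hf : ∀ n, 0 ≤ f n) (hg : ∀ n, 0 ≤ g n)
    (hf2 : Summable (fun n => f n ^ 2)) (hg2 : Summable (fun n => g n ^ 2)) :
    Summable (fun n => f n * g n) ∧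
    ∑' n, f n * g n ≤ Real.sqrt (∑' n, f n ^ 2) * Real.sqrt (∑' n, g n ^ 2) := by
  have hs : Summable (fun n => f n * g n) := by
    refine Summable.of_nonneg_of_le (fun n => mul_nonneg (hf n) (hg n))
      (fun n => ?_) ((hf2.add hg2).mul_left (1/2 : ℝ))
    nlinarith [sq_nonneg (f n - g n)]
  refine ⟨hs, Summable.tsum_le_of_sum_le hs fun s => ?_⟩
  refine (Real.sum_mul_le_sqrt_mul_sqrt s f g).trans ?_
  gcongr
  · exact Summable.sum_le_tsum s (fun n _ => sq_nonneg _) hf2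
  · exact Summable.sum_le_tsum s (fun n _ => sq_nonneg _) hg2

/-- If `∑ (n+2)⁵/(n+1)|aₙ|² = M² < ∞`, then for `|z| < 1` the series `∑ aₙ zⁿ`
converges absolutely and `|∑ aₙ zⁿ| ≤ √(ζ(4) - ζ(5)) · M`. -/
theorem stmt5 (a : ℕ → ℂ) (M : ℝ) (hM0 : 0 ≤ M)
    (hsum : Summable (fun n : ℕ => ((n : ℝ) + 2) ^ 5 / ((n : ℝ) + 1) * ‖a n‖ ^ 2))
    (hM : (∑' n : ℕ, ((n : ℝ) + 2) ^ 5 / ((n : ℝ) + 1) * ‖a n‖ ^ 2) = M ^ 2)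
    (z : ℂ) (hz : ‖z‖ < 1) :
    Summable (fun n : ℕ => ‖a n * z ^ n‖) ∧
    ‖∑' n : ℕ, a n * z ^ n‖ ≤ Real.sqrt ((riemannZeta 4 - riemannZeta 5).re) * M := by
  set w : ℕ → ℝ := fun n => ((n : ℝ) + 2) ^ 5 / ((n : ℝ) + 1) with hw
  set u : ℕ → ℝ := fun n => ((n : ℝ) + 1) / ((n : ℝ) + 2) ^ 5 with hu
  have hwpos : ∀ n, 0 < w n := fun n => by positivity
  have hupos : ∀ n, 0 < u n := fun n => by positivity
  have hwu : ∀ n, w n * u n = 1 := by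
    intro n
    have h1 : ((n : ℝ) + 1) ≠ 0 := by positivity
    have h2 : ((n : ℝ) + 2) ^ 5 ≠ 0 := by positivity
    show _ / _ * (_ / _) = (1:ℝ)
    rw [div_mul_div_comm, mul_comm (((n:ℝ)+2)^5), div_self (mul_ne_zero h1 h2)]
  set f : ℕ → ℝ := fun n => Real.sqrt (w n) * ‖a n‖ with hf
  set g : ℕ → ℝ := fun n => Real.sqrt (u n) * ‖z‖ ^ n with hg
  have hz0 : 0 ≤ ‖z‖ := norm_nonneg z
  have hfg : ∀ n, f n * g n = ‖a n * z ^ n‖ := by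
    intro n
    have : Real.sqrt (w n) * Real.sqrt (u n) = 1 := by
      rw [← Real.sqrt_mul (hwpos n).le, hwu n, Real.sqrt_one]
    rw [norm_mul, norm_pow]
    calc f n * g n = (Real.sqrt (w n) * Real.sqrt (u n)) * (‖a n‖ * ‖z‖ ^ n) := by ring
    _ = ‖a n‖ * ‖z‖ ^ n := by rw [this, one_mul]
  have hf2 : (fun n => f n ^ 2) = fun n => w n * ‖a n‖ ^ 2 := by
    funext n
    rw [hf, mul_pow, Real.sq_sqrt (hwpos n).le]
  have hg2le : ∀ n, g n ^ 2 ≤ u n := by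
    intro n
    rw [hg, mul_pow, Real.sq_sqrt (hupos n).le]
    have h1 : (‖z‖ ^ n) ^ 2 ≤ 1 := by
      have := pow_le_one₀ hz0 hz.le (n := n)
      nlinarith [pow_nonneg hz0 n]
    calc u n * (‖z‖ ^ n) ^ 2 ≤ u n * 1 := by
          exact mul_le_mul_of_nonneg_left h1 (hupos n).le
      _ = u n := mul_one _
  have hg2nonneg : ∀ n, (0 : ℝ) ≤ g n ^ 2 := fun n => sq_nonneg _
  have hg2summ : Summable (fun n => g n ^ 2) :=
    Summable.of_nonneg_of_le hg2nonneg hg2le stmt5_summable_shift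
  have hf2summ : Summable (fun n => f n ^ 2) := by rw [hf2]; exact hsum
  obtain ⟨hS, hle⟩ := stmt5_tsum_CS f g
    (fun n => mul_nonneg (Real.sqrt_nonneg _) (norm_nonneg _))
    (fun n => mul_nonneg (Real.sqrt_nonneg _) (pow_nonneg hz0 n))
    hf2summ hg2summ
  have hSumm : Summable (fun n : ℕ => ‖a n * z ^ n‖) := hS.congr hfg
  refine ⟨hSumm, ?_⟩
  have h1 : ‖∑' n : ℕ, a n * z ^ n‖ ≤ ∑' n : ℕ, ‖a n * z ^ n‖ :=
    norm_tsum_le_tsum_norm hSumm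
  have h2 : ∑' n : ℕ, ‖a n * z ^ n‖ = ∑' n, f n * g n := by
    exact (tsum_congr fun n => (hfg n).symm)
  have hf2sum : ∑' n, f n ^ 2 = M ^ 2 := by rw [hf2]; exact hM
  have hg2sum : ∑' n, g n ^ 2 ≤ (riemannZeta 4 - riemannZeta 5).re := by
    rw [stmt5_zeta_re_eq]
    exact Summable.tsum_le_tsum hg2le hg2summ stmt5_summable_shift
  calc ‖∑' n : ℕ, a n * z ^ n‖ ≤ ∑' n, f n * g n := by rw [← h2]; exact h1
    _ ≤ Real.sqrt (∑' n, f n ^ 2) * Real.sqrt (∑' n, g n ^ 2) := hle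
    _ = M * Real.sqrt (∑' n, g n ^ 2) := by rw [hf2sum, Real.sqrt_sq hM0]
    _ ≤ M * Real.sqrt ((riemannZeta 4 - riemannZeta 5).re) := by
        gcongr
    _ = Real.sqrt ((riemannZeta 4 - riemannZeta 5).re) * M := mul_comm _ _
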